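/- Let d ≥ 2 and m ≥ 1 be integers, let s_1, …, s_m ∈ ℝ^d be pairwise distinct points that are all nonzero, let T* > 0 and let k ∈ ℤ. Then there exist complex vectors ρ_1, …, ρ_m ∈ ℂ^d with ρ_l·ρ_l = 2kπ i / T* for every l, such that for every right-hand side vector (R_1, …, R_m) ∈ ℂ^m there exists a unique vector (λ_1, …, λ_m) ∈ ℂ^m satisfying ∑_{j=1}^m λ_j exp(ρ_l·s_j) = R_l for all l = 1, …, m. -/

import Mathlib

open Polynomial Finset Complex Filter

lemma px_ne_zero {d : ℕ} (x : Fin d → ℝ) (hx : x ≠ 0) :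
    (∑ i : Fin d, monomial (i : ℕ) (x i)) ≠ 0 := by
  obtain ⟨i0, hi0⟩ : ∃ i, x i ≠ 0 := by
    by_contra h; push_neg at h; exact hx (funext h)
  intro h
  have := congrArg (fun p => Polynomial.coeff p (i0 : ℕ)) h
  simp only [Polynomial.finset_sum_coeff, Polynomial.coeff_monomial, Polynomial.coeff_zero,
    Fin.val_inj] at this
  rw [Finset.sum_ite_eq' Finset.univ] at this
  simp at this
  exact hi0 this

lemma exists_sep {d m : ℕ} (s : Fin m → Fin d → ℝ) (hdist : Function.Injective s) :
    ∃ t : ℝ, t ≠ 0 ∧ Function.Injective (fun j => ∑ i : Fin d, s j i * t ^ (i : ℕ)) := by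
  classical
  set bad : Set ℝ := {0} ∪ ⋃ p ∈ Finset.univ.offDiag (α := Fin m),
      {x : ℝ | (∑ i : Fin d, monomial (i : ℕ) ((s p.1 - s p.2) i)).IsRoot x} with hbad
  have hfin : bad.Finite := by
    apply (Set.finite_singleton 0).union
    apply Set.Finite.biUnion (Finset.finite_toSet _)
    intro p hp
    apply Polynomial.finite_setOf_isRoot
    apply px_ne_zero
    simp only [Finset.mem_coe, Finset.mem_offDiag] at hp
    exact sub_ne_zero.2 (fun h => hp.2.2 (hdist h))
  obtain ⟨t, ht⟩ : ∃ t, t ∉ bad := by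
    have := Set.infinite_univ (α := ℝ) |>.diff hfin
    obtain ⟨t, ht⟩ := this.nonempty
    exact ⟨t, ht.2⟩
  rw [hbad, Set.mem_union, Set.mem_singleton_iff] at ht
  push_neg at ht
  obtain ⟨ht0, htU⟩ := ht
  rw [Set.mem_iUnion₂] at htU
  push_neg at htU
  refine ⟨t, ht0, ?_⟩
  intro j j' h
  by_contra hne
  have hmem := htU (j, j') (by simp [Finset.mem_offDiag, hne])
  apply hmem
  simp only [Set.mem_setOf_eq, Polynomial.IsRoot, Polynomial.eval_finset_sum,
    Polynomial.eval_monomial]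
  simp only [Pi.sub_apply, sub_mul, Finset.sum_sub_distrib]
  dsimp at h
  rw [h]; ring

lemma pick (n : ℕ) (f : Fin n → ℂ → ℂ)
    (h : ∀ lam : Fin n → ℂ, lam ≠ 0 → ∃ u : ℂ, u ≠ 0 ∧ ∑ j, lam j * f j u ≠ 0) :
    ∃ u : Fin n → ℂ, (∀ l, u l ≠ 0) ∧ (Matrix.of fun l j => f j (u l)).det ≠ 0 := by
  induction n with
  | zero =>
    exact ⟨Fin.elim0, fun l => l.elim0, by simp [Matrix.det_fin_zero]⟩
  | succ n ih =>
    obtain ⟨u0, hu0, hdet⟩ := ih (fun j => f j.castSucc) (by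
      intro lam hlam
      obtain ⟨u, hu, hsum⟩ := h (Fin.snoc lam 0) (by
        intro hz
        apply hlam
        funext j
        have := congrFun hz j.castSucc
        simpa using this)
      refine ⟨u, hu, ?_⟩
      intro hz
      apply hsum
      rw [Fin.sum_univ_castSucc]
      simpa using hz)
    set lam : Fin (n + 1) → ℂ := fun j =>
      (-1 : ℂ) ^ ((n : ℕ) + (j : ℕ)) *
        (Matrix.of (fun l j' : Fin n => f (j.succAbove j') (u0 l))).det with hlamdef
    have hlamlast : lam (Fin.last n) ≠ 0 := by
      have heq : (fun l j' : Fin n => f ((Fin.last n).succAbove j') (u0 l)) =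
          (fun l j' : Fin n => f j'.castSucc (u0 l)) := by
        funext l j'; rw [Fin.succAbove_last]
      simp only [hlamdef, heq, Fin.val_last]
      intro hz
      rcases mul_eq_zero.1 hz with h1 | h2
      · exact pow_ne_zero _ (by norm_num : (-1:ℂ) ≠ 0) h1
      · exact hdet h2
    obtain ⟨u, hu, hsum⟩ := h lam (by
      intro hz; exact hlamlast (by rw [hz]; rfl))
    refine ⟨Fin.snoc u0 u, ?_, ?_⟩
    · intro l
      refine Fin.lastCases ?_ ?_ l
      · simpa using hu
      · intro i; simpa using hu0 i
    · rw [Matrix.det_succ_row _ (Fin.last n)]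
      intro hz
      apply hsum
      rw [← hz]
      apply Finset.sum_congr rfl
      intro j _
      have hsub : ((Matrix.of fun l j : Fin (n+1) => f j ((Fin.snoc u0 u : Fin (n+1) → ℂ) l)).submatrix
            (Fin.last n).succAbove j.succAbove) =
          Matrix.of (fun l j' : Fin n => f (j.succAbove j') (u0 l)) := by
        funext l j'
        simp [Fin.succAbove_last, Fin.snoc_castSucc]
      rw [hsub]
      simp only [hlamdef, Matrix.of_apply, Fin.val_last, Fin.snoc_last]
      ring

lemma indep {m : ℕ} (a b : Fin m → ℝ) (ha : Function.Injective a) (c : ℂ)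
    (lam : Fin m → ℂ) (hlam : lam ≠ 0) :
    ∃ u : ℂ, u ≠ 0 ∧
      ∑ j, lam j * Complex.exp ((u / 2) * ((a j : ℂ) - Complex.I * (b j : ℂ))
        + (c / (2 * u)) * ((a j : ℂ) + Complex.I * (b j : ℂ))) ≠ 0 := by
  classical
  by_contra hcon
  push_neg at hcon
  set ζ : Fin m → ℂ := fun j => (a j : ℂ) - Complex.I * (b j : ℂ) with hζ
  set z : Fin m → ℂ := fun j => (a j : ℂ) + Complex.I * (b j : ℂ) with hz
  set E : Fin m → ℂ → ℂ := fun j u => (u / 2) * ζ j + (c / (2 * u)) * z j with hE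
  have hsupp : (Finset.univ.filter (fun j => lam j ≠ 0)).Nonempty := by
    by_contra hempty
    apply hlam
    funext j
    by_contra hj
    exact hempty ⟨j, Finset.mem_filter.2 ⟨Finset.mem_univ j, hj⟩⟩
  obtain ⟨j0, hj0mem, hj0max⟩ := Finset.exists_max_image _ a hsupp
  have hlamj0 : lam j0 ≠ 0 := (Finset.mem_filter.1 hj0mem).2
  set g : ℕ → ℂ := fun n => ∑ j, lam j * Complex.exp
      (((n : ℂ) + 1) * (ζ j - ζ j0) + (c / (4 * ((n : ℂ) + 1))) * (z j - z j0)) with hg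
  have hN : ∀ n : ℕ, ((n : ℂ) + 1) ≠ 0 := by
    intro n
    have : ((n : ℂ) + 1) = ((n + 1 : ℕ) : ℂ) := by push_cast; ring
    rw [this]
    exact_mod_cast Nat.succ_ne_zero n
  have hg0 : ∀ n, g n = 0 := by
    intro n
    have hu : (2 * ((n : ℂ) + 1)) ≠ 0 := mul_ne_zero two_ne_zero (hN n)
    have hsum := hcon (2 * ((n : ℂ) + 1)) hu
    have hexp : ∀ j : Fin m,
        ((n : ℂ) + 1) * (ζ j - ζ j0) + (c / (4 * ((n : ℂ) + 1))) * (z j - z j0)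
          = E j (2 * ((n : ℂ) + 1)) - E j0 (2 * ((n : ℂ) + 1)) := by
      intro j
      simp only [hE]
      have h4 : (4 : ℂ) * ((n : ℂ) + 1) ≠ 0 := by
        exact mul_ne_zero (by norm_num) (hN n)
      field_simp
      ring
    have hdiv : g n = (∑ j, lam j * Complex.exp (E j (2 * ((n : ℂ) + 1)))) /
        Complex.exp (E j0 (2 * ((n : ℂ) + 1))) := by
      rw [Finset.sum_div]
      apply Finset.sum_congr rfl
      intro j _
      rw [mul_div_assoc, ← Complex.exp_sub, hexp j]
    rw [hdiv]
    simp only [hE] at hsum ⊢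
    rw [hsum, zero_div]
  have hlim : Tendsto g atTop (nhds (lam j0)) := by
    have hrw : (lam j0) = ∑ j, (if j = j0 then lam j0 else 0) := by simp
    rw [hrw]
    apply tendsto_finset_sum
    intro j _
    by_cases hjj : j = j0
    · subst hjj
      simp only [if_pos rfl, sub_self, mul_zero, add_zero, Complex.exp_zero, mul_one]
      exact tendsto_const_nhds
    · rw [if_neg hjj]
      by_cases hl : lam j = 0
      · simp only [hl, zero_mul]
        exact tendsto_const_nhds
      · have hjmem : j ∈ Finset.univ.filter (fun j => lam j ≠ 0) :=
          Finset.mem_filter.2 ⟨Finset.mem_univ j, hl⟩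
        have hlt : a j < a j0 :=
          lt_of_le_of_ne (hj0max j hjmem) (fun h => hjj (ha h))
        rw [tendsto_zero_iff_norm_tendsto_zero]
        set K : ℝ := ‖c‖ * ‖z j - z j0‖ / 4 with hK
        set w : ℕ → ℂ := fun n =>
          ((n : ℂ) + 1) * (ζ j - ζ j0) + (c / (4 * ((n : ℂ) + 1))) * (z j - z j0) with hw
        have hre : ∀ n : ℕ, (w n).re ≤ ((n : ℝ) + 1) * (a j - a j0) + K := by
          intro n
          have h1 : (((n : ℂ) + 1) * (ζ j - ζ j0)).re = ((n : ℝ) + 1) * (a j - a j0) := by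
            have : ((n : ℂ) + 1) * (ζ j - ζ j0)
                = ((((n : ℝ) + 1) * (a j - a j0) : ℝ) : ℂ)
                  - ((((n : ℝ) + 1) * (b j - b j0) : ℝ) : ℂ) * Complex.I := by
              simp only [hζ]; push_cast; ring
            rw [this]
            simp
          have h2 : ((c / (4 * ((n : ℂ) + 1))) * (z j - z j0)).re ≤ K := by
            calc ((c / (4 * ((n : ℂ) + 1))) * (z j - z j0)).re
                ≤ ‖(c / (4 * ((n : ℂ) + 1))) * (z j - z j0)‖ :=
                  Complex.re_le_norm _
              _ = ‖c‖ / ‖(4 : ℂ) * ((n : ℂ) + 1)‖ * ‖z j - z j0‖ := by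
                  rw [norm_mul, norm_div]
              _ ≤ ‖c‖ / 4 * ‖z j - z j0‖ := by
                  apply mul_le_mul_of_nonneg_right _ (norm_nonneg _)
                  apply div_le_div_of_nonneg_left (norm_nonneg _) (by norm_num)
                  have : ((4 : ℂ) * ((n : ℂ) + 1)) = (((4 : ℝ) * ((n : ℝ) + 1) : ℝ) : ℂ) := by
                    push_cast; ring
                  rw [this, Complex.norm_real, Real.norm_eq_abs, abs_of_pos (by positivity)]
                  nlinarith [Nat.cast_nonneg (α := ℝ) n]
              _ = K := by rw [hK]; ring
          simp only [hw, Complex.add_re]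
          rw [h1]
          linarith
        have hBbot : Tendsto (fun n : ℕ => ((n : ℝ) + 1) * (a j - a j0) + K) atTop atBot := by
          apply Filter.tendsto_atBot_add_const_right
          apply Filter.Tendsto.atTop_mul_const_of_neg (by linarith : a j - a j0 < 0)
          exact tendsto_atTop_add_const_right _ _ tendsto_natCast_atTop_atTop
        have hexpB : Tendsto (fun n : ℕ => ‖lam j‖ * Real.exp (((n : ℝ) + 1) * (a j - a j0) + K))
            atTop (nhds 0) := by
          rw [show (0:ℝ) = ‖lam j‖ * 0 by ring]
          exact (Real.tendsto_exp_atBot.comp hBbot).const_mul _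
        apply squeeze_zero (fun n => norm_nonneg _) _ hexpB
        intro n
        rw [norm_mul, Complex.norm_exp]
        exact mul_le_mul_of_nonneg_left (Real.exp_le_exp.2 (hre n)) (norm_nonneg _)
  have := tendsto_nhds_unique hlim (by
    have hgz : g = fun _ => (0 : ℂ) := funext hg0
    rw [hgz]; exact tendsto_const_nhds)
  exact hlamj0 this

lemma sigma_tau_sq (x c : ℂ) (hx : x ≠ 0) :
    ((x + c / x) / 2) ^ 2 + ((x - c / x) / (2 * Complex.I)) ^ 2 = c := by
  have hI := Complex.I_ne_zero
  field_simp
  ring_nf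
  simp [Complex.I_sq]
  ring

lemma sigma_tau_lin (x c A B : ℂ) (hx : x ≠ 0) :
    ((x + c / x) / 2) * A + ((x - c / x) / (2 * Complex.I)) * B
      = (x / 2) * (A - Complex.I * B) + (c / (2 * x)) * (A + Complex.I * B) := by
  have hI := Complex.I_ne_zero
  field_simp
  ring_nf
  simp [Complex.I_sq]
  ring

theorem stmt12 (d m : ℕ) (hd : 2 ≤ d) (hm : 1 ≤ m)
    (s : Fin m → (Fin d → ℝ)) (hdist : Function.Injective s) (hnz : ∀ j, s j ≠ 0)
    (T : ℝ) (hT : 0 < T) (k : ℤ) :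
    ∃ ρ : Fin m → (Fin d → ℂ),
      (∀ l, ∑ i, ρ l i ^ 2 = 2 * (k : ℂ) * (Real.pi : ℂ) * Complex.I / (T : ℂ)) ∧
      ∀ R : Fin m → ℂ, ∃! Λ : Fin m → ℂ,
        ∀ l, ∑ j, Λ j * Complex.exp (∑ i, ρ l i * (s j i : ℂ)) = R l := by
  classical
  obtain ⟨t, ht0, htinj⟩ := exists_sep s hdist
  set i0 : Fin d := ⟨0, by omega⟩ with hi0
  set i1 : Fin d := ⟨1, by omega⟩ with hi1
  set w : Fin d → ℝ := fun i => t ^ (i : ℕ) with hwdef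
  set W : ℝ := ∑ i, w i * w i with hWdef
  have hW : 0 < W := by
    apply Finset.sum_pos' (fun i _ => mul_self_nonneg _) ⟨i0, Finset.mem_univ _, ?_⟩
    simp [hwdef, hi0]
  set v : Fin d → ℝ := fun i => (if i = i1 then W else 0) - w i1 * w i with hvdef
  have hvw : ∑ i, v i * w i = 0 := by
    have hterm : ∀ i, v i * w i = (if i = i1 then W * w i else 0) - w i1 * (w i * w i) := by
      intro i; simp only [hvdef]; split <;> ring
    rw [Finset.sum_congr rfl (fun i _ => hterm i), Finset.sum_sub_distrib,
      Finset.sum_ite_eq' Finset.univ i1 (fun i => W * w i), ← Finset.mul_sum, ← hWdef]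
    simp only [Finset.mem_univ, if_pos]
    ring
  have hvi0 : v i0 = -t := by
    have h01 : i0 ≠ i1 := by simp [hi0, hi1, Fin.ext_iff]
    simp [hvdef, if_neg h01, hwdef, hi0, hi1]
  set V : ℝ := ∑ i, v i * v i with hVdef
  have hV : 0 < V := by
    apply Finset.sum_pos' (fun i _ => mul_self_nonneg _) ⟨i0, Finset.mem_univ _, ?_⟩
    rw [hvi0]
    nlinarith [mul_self_pos.mpr ht0]
  set c : ℂ := 2 * (k : ℂ) * (Real.pi : ℂ) * Complex.I / (T : ℂ) with hcdef
  set sW : ℝ := Real.sqrt W with hsWdef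
  set sV : ℝ := Real.sqrt V with hsVdef
  have hsW : 0 < sW := Real.sqrt_pos.2 hW
  have hsV : 0 < sV := Real.sqrt_pos.2 hV
  set w' : Fin d → ℝ := fun i => w i / sW with hw'def
  set v' : Fin d → ℝ := fun i => v i / sV with hv'def
  have hw'w' : ∑ i, w' i * w' i = 1 := by
    have hterm : ∀ i : Fin d, w' i * w' i = (w i * w i) / W := by
      intro i
      simp only [hw'def, div_mul_div_comm, hsWdef, Real.mul_self_sqrt hW.le]
    rw [Finset.sum_congr rfl (fun i _ => hterm i), ← Finset.sum_div, ← hWdef,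
      div_self hW.ne']
  have hv'v' : ∑ i, v' i * v' i = 1 := by
    have hterm : ∀ i : Fin d, v' i * v' i = (v i * v i) / V := by
      intro i
      simp only [hv'def, div_mul_div_comm, hsVdef, Real.mul_self_sqrt hV.le]
    rw [Finset.sum_congr rfl (fun i _ => hterm i), ← Finset.sum_div, ← hVdef,
      div_self hV.ne']
  have hw'v' : ∑ i, w' i * v' i = 0 := by
    have hterm : ∀ i : Fin d, w' i * v' i = (v i * w i) / (sW * sV) := by
      intro i; simp only [hw'def, hv'def, div_mul_div_comm]; ring_nf
    rw [Finset.sum_congr rfl (fun i _ => hterm i), ← Finset.sum_div, hvw, zero_div]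
  set a : Fin m → ℝ := fun j => ∑ i, w' i * s j i with hadef
  set b : Fin m → ℝ := fun j => ∑ i, v' i * s j i with hbdef
  have haform : ∀ j, a j = (∑ i, s j i * t ^ (i : ℕ)) / sW := by
    intro j
    rw [hadef, Finset.sum_div]
    apply Finset.sum_congr rfl
    intro i _
    simp only [hw'def, hwdef]
    ring
  have ha : Function.Injective a := by
    intro j j' h
    rw [haform, haform] at h
    apply htinj
    field_simp [hsW.ne'] at h
    exact h
  set f : Fin m → ℂ → ℂ := fun j u => Complex.exp ((u / 2) * ((a j : ℂ) - Complex.I * (b j : ℂ))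
      + (c / (2 * u)) * ((a j : ℂ) + Complex.I * (b j : ℂ))) with hfdef
  obtain ⟨u, hune, hdet⟩ := pick m f (fun lam hlam => indep a b ha c lam hlam)
  set σ : Fin m → ℂ := fun l => (u l + c / u l) / 2 with hσdef
  set τ : Fin m → ℂ := fun l => (u l - c / u l) / (2 * Complex.I) with hτdef
  set ρ : Fin m → Fin d → ℂ := fun l i => σ l * (w' i : ℂ) + τ l * (v' i : ℂ) with hρdef
  refine ⟨ρ, ?_, ?_⟩
  · intro l
    have hsum : ∑ i, ρ l i ^ 2 = σ l ^ 2 * ((∑ i, w' i * w' i : ℝ) : ℂ)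
        + (2 * σ l * τ l) * ((∑ i, w' i * v' i : ℝ) : ℂ)
        + τ l ^ 2 * ((∑ i, v' i * v' i : ℝ) : ℂ) := by
      push_cast
      rw [Finset.mul_sum, Finset.mul_sum, Finset.mul_sum, ← Finset.sum_add_distrib,
        ← Finset.sum_add_distrib]
      apply Finset.sum_congr rfl
      intro i _
      simp only [hρdef]
      ring
    rw [hsum, hw'w', hw'v', hv'v']
    have := sigma_tau_sq (u l) c (hune l)
    rw [hσdef, hτdef]
    push_cast
    rw [mul_one, mul_zero, add_zero, mul_one]
    exact this
  · intro R
    set M : Matrix (Fin m) (Fin m) ℂ := Matrix.of fun l j => f j (u l) with hMdef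
    have hM : IsUnit M.det := isUnit_iff_ne_zero.2 hdet
    have hexp : ∀ l j, Complex.exp (∑ i, ρ l i * (s j i : ℂ)) = M l j := by
      intro l j
      have h1 : ∑ i, ρ l i * (s j i : ℂ) = σ l * ((a j : ℝ) : ℂ) + τ l * ((b j : ℝ) : ℂ) := by
        rw [hadef, hbdef]
        push_cast
        rw [Finset.mul_sum, Finset.mul_sum, ← Finset.sum_add_distrib]
        apply Finset.sum_congr rfl
        intro i _
        simp only [hρdef]
        push_cast
        ring
      rw [h1, hσdef, hτdef, sigma_tau_lin (u l) c _ _ (hune l)]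
      rw [hMdef]
      simp only [Matrix.of_apply, hfdef]
    have hsum2 : ∀ (Λ : Fin m → ℂ) l,
        ∑ j, Λ j * Complex.exp (∑ i, ρ l i * (s j i : ℂ)) = M.mulVec Λ l := by
      intro Λ l
      rw [Matrix.mulVec, dotProduct]
      apply Finset.sum_congr rfl
      intro j _
      rw [hexp l j]
      ring
    refine ⟨M⁻¹.mulVec R, ?_, ?_⟩
    · intro l
      rw [hsum2, Matrix.mulVec_mulVec, Matrix.mul_nonsing_inv _ hM, Matrix.one_mulVec]
    · intro Λ hΛ
      have hMv : M.mulVec Λ = R := funext fun l => by rw [← hsum2 Λ l]; exact hΛ l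
      rw [← hMv, Matrix.mulVec_mulVec, Matrix.nonsing_inv_mul _ hM, Matrix.one_mulVec]
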